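/- For every integer m ≥ 1 and every x ∈ ℝ, one has (x² + m)^{−1/2} > V_m(x) > (x² + m + 1)^{−1/2}; and for m = 0 and every x ≠ 0, one has 1/|x| > V_0(x) > (x² + 1)^{−1/2}. -/

import Mathlib

open MeasureTheory

/-- The regularized Coulomb potential
`V_m(x) = (1/m!) ∫₀^∞ u^m e^{−u} (x² + u)^{−1/2} du`. -/
noncomputable def Vm (m : ℕ) (x : ℝ) : ℝ :=
  (1 / (m.factorial : ℝ)) *
    ∫ u in Set.Ioi (0 : ℝ), u ^ m * Real.exp (-u) / Real.sqrt (x ^ 2 + u)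

section Aux
open Set Real

lemma intOn_pow_exp (k : ℕ) : IntegrableOn (fun u : ℝ => u ^ k * Real.exp (-u)) (Ioi 0) := by
  have h := Real.GammaIntegral_convergent (s := (k : ℝ) + 1) (by positivity)
  simp only [add_sub_cancel_right] at h
  refine h.congr_fun (fun u hu => ?_) measurableSet_Ioi
  simp only [Real.rpow_natCast]; ring

lemma int_pow_exp (k : ℕ) : ∫ u in Ioi (0:ℝ), u ^ k * Real.exp (-u) = k.factorial := by
  have h := Real.Gamma_eq_integral (s := (k : ℝ) + 1) (by positivity)
  rw [Real.Gamma_nat_eq_factorial] at h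
  rw [h]
  apply setIntegral_congr_fun measurableSet_Ioi
  intro u hu
  simp only [add_sub_cancel_right, Real.rpow_natCast]
  ring

lemma contOn_div_sqrt (k : ℕ) (x : ℝ) :
    ContinuousOn (fun u : ℝ => u ^ k * Real.exp (-u) / Real.sqrt (x ^ 2 + u)) (Ioi 0) := by
  apply ContinuousOn.div
  · fun_prop
  · fun_prop
  · intro u hu
    have hu' : (0:ℝ) < u := hu
    have : 0 < x ^ 2 + u := by positivity
    exact (Real.sqrt_pos.2 this).ne'

lemma contOn_div_sq (k : ℕ) (x : ℝ) :
    ContinuousOn (fun u : ℝ => u ^ k * Real.exp (-u) / (x ^ 2 + u)) (Ioi 0) := by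
  apply ContinuousOn.div
  · fun_prop
  · fun_prop
  · intro u hu
    have hu' : (0:ℝ) < u := hu
    positivity

lemma intOn_div_sqrt (k : ℕ) (x : ℝ) :
    IntegrableOn (fun u : ℝ => u ^ (k+1) * Real.exp (-u) / Real.sqrt (x ^ 2 + u)) (Ioi 0) := by
  refine Integrable.mono' (((intOn_pow_exp k).add (intOn_pow_exp (k+1))))
    ((contOn_div_sqrt (k+1) x).aestronglyMeasurable measurableSet_Ioi) ?_
  rw [ae_restrict_iff' measurableSet_Ioi]
  filter_upwards with u
  intro hu
  have hu' : (0:ℝ) < u := hu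
  have hsu : 0 < Real.sqrt u := Real.sqrt_pos.2 hu'
  have hsx : Real.sqrt u ≤ Real.sqrt (x ^ 2 + u) := Real.sqrt_le_sqrt (by nlinarith)
  have hnn : (0:ℝ) ≤ u ^ (k+1) * Real.exp (-u) / Real.sqrt (x ^ 2 + u) := by positivity
  rw [Real.norm_of_nonneg hnn]
  have h1 : u ^ (k+1) * Real.exp (-u) / Real.sqrt (x ^ 2 + u)
      ≤ u ^ (k+1) * Real.exp (-u) / Real.sqrt u := by
    gcongr
  refine h1.trans ?_
  have hs2 : Real.sqrt u * Real.sqrt u = u := Real.mul_self_sqrt hu'.le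
  have hle : Real.sqrt u ≤ 1 + u := by nlinarith [Real.sq_sqrt hu'.le, sq_nonneg (Real.sqrt u - 1)]
  have key : u ^ (k+1) / Real.sqrt u = u ^ k * Real.sqrt u := by
    rw [div_eq_iff hsu.ne', mul_assoc, hs2, ← pow_succ]
  calc u ^ (k+1) * Real.exp (-u) / Real.sqrt u
      = (u ^ (k+1) / Real.sqrt u) * Real.exp (-u) := by ring
    _ = u ^ k * Real.sqrt u * Real.exp (-u) := by rw [key]
    _ ≤ u ^ k * (1 + u) * Real.exp (-u) := by gcongr
    _ = u ^ k * Real.exp (-u) + u ^ (k+1) * Real.exp (-u) := by ring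

lemma intOn_div_sqrt' (k : ℕ) (x : ℝ) (hx : x ≠ 0) :
    IntegrableOn (fun u : ℝ => u ^ k * Real.exp (-u) / Real.sqrt (x ^ 2 + u)) (Ioi 0) := by
  refine Integrable.mono' (((intOn_pow_exp k)).const_mul (1/|x|))
    ((contOn_div_sqrt k x).aestronglyMeasurable measurableSet_Ioi) ?_
  rw [ae_restrict_iff' measurableSet_Ioi]
  filter_upwards with u
  intro hu
  have hu' : (0:ℝ) < u := hu
  have hax : 0 < |x| := abs_pos.2 hx
  have hsx : |x| ≤ Real.sqrt (x ^ 2 + u) := by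
    rw [← Real.sqrt_sq_eq_abs]
    exact Real.sqrt_le_sqrt (by nlinarith)
  have hnn : (0:ℝ) ≤ u ^ k * Real.exp (-u) / Real.sqrt (x ^ 2 + u) := by positivity
  rw [Real.norm_of_nonneg hnn]
  have h2 : u ^ k * Real.exp (-u) / Real.sqrt (x ^ 2 + u) ≤ u ^ k * Real.exp (-u) / |x| := by
    gcongr
  exact h2.trans_eq (by ring)

lemma intOn_div_sq (k : ℕ) (x : ℝ) :
    IntegrableOn (fun u : ℝ => u ^ (k+1) * Real.exp (-u) / (x ^ 2 + u)) (Ioi 0) := by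
  refine Integrable.mono' (intOn_pow_exp k)
    ((contOn_div_sq (k+1) x).aestronglyMeasurable measurableSet_Ioi) ?_
  rw [ae_restrict_iff' measurableSet_Ioi]
  filter_upwards with u
  intro hu
  have hu' : (0:ℝ) < u := hu
  have hnn : (0:ℝ) ≤ u ^ (k+1) * Real.exp (-u) / (x ^ 2 + u) := by positivity
  rw [Real.norm_of_nonneg hnn]
  rw [div_le_iff₀ (by positivity : (0:ℝ) < x ^ 2 + u)]
  calc u ^ (k+1) * Real.exp (-u) = u ^ k * Real.exp (-u) * u := by ring
    _ ≤ u ^ k * Real.exp (-u) * (x ^ 2 + u) := by gcongr; nlinarith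

lemma identA (k : ℕ) (E s u x l : ℝ) (hs : s ≠ 0) (hs2 : s^2 = x^2 + u) :
    u^(k+1)*E - x^2*(u^(k+1)*E/(x^2+u)) - 2*l*(u^(k+1)*E/s) + l^2*(u^k*E)
      = u^k*E*(u/s - l)^2 := by
  rw [← hs2]
  field_simp
  linear_combination (u^(k+1) * E) * hs2

lemma identB (k : ℕ) (E s u x l : ℝ) (hs : s ≠ 0) (hs2 : s^2 = x^2 + u) :
    u^(k+1)*E/(x^2+u) - 2*l*(u^(k+1)*E/s) + l^2*(u^(k+1)*E)
      = u^(k+1)*E*(1/s - l)^2 := by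
  rw [← hs2]
  field_simp
  ring

lemma tangent_nonneg (s t x u a : ℝ) (hs : 0 < s) (ht : 0 < t)
    (hs2 : s^2 = x^2 + u) (ht2 : t^2 = x^2 + a) :
    0 ≤ 1/s - 1/t + (u - a)/(2*t^3) := by
  have hu : u = s^2 - x^2 := by linarith
  have ha : a = t^2 - x^2 := by linarith
  subst hu; subst ha
  have key : 1/s - 1/t + ((s^2-x^2) - (t^2-x^2))/(2*t^3) = (s-t)^2*(s+2*t)/(2*t^3*s) := by
    field_simp
    ring
  rw [key]
  positivity

lemma tangent_pos (s t x u a : ℝ) (hs : 0 < s) (ht : 0 < t) (hst : s ≠ t)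
    (hs2 : s^2 = x^2 + u) (ht2 : t^2 = x^2 + a) :
    0 < 1/s - 1/t + (u - a)/(2*t^3) := by
  have hu : u = s^2 - x^2 := by linarith
  have ha : a = t^2 - x^2 := by linarith
  subst hu; subst ha
  have key : 1/s - 1/t + ((s^2-x^2) - (t^2-x^2))/(2*t^3) = (s-t)^2*(s+2*t)/(2*t^3*s) := by
    field_simp
    ring
  rw [key]
  have h2 : 0 < (s-t)^2 := by
    have := sub_ne_zero.2 hst
    positivity
  have h3 : 0 < s + 2*t := by linarith
  positivity

lemma c_mono (x u v : ℝ) (hu : 0 < u) (huv : u < v) :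
    u / Real.sqrt (x^2+u) < v / Real.sqrt (x^2+v) := by
  have hv : 0 < v := hu.trans huv
  have hsu : 0 < Real.sqrt (x^2+u) := Real.sqrt_pos.2 (by positivity)
  have hsv : 0 < Real.sqrt (x^2+v) := Real.sqrt_pos.2 (by positivity)
  have hsu2 : Real.sqrt (x^2+u)^2 = x^2+u := Real.sq_sqrt (by positivity)
  have hsv2 : Real.sqrt (x^2+v)^2 = x^2+v := Real.sq_sqrt (by positivity)
  rw [div_lt_div_iff₀ hsu hsv]
  have hsq : (u * Real.sqrt (x^2+v))^2 < (v * Real.sqrt (x^2+u))^2 := by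
    rw [mul_pow, mul_pow, hsu2, hsv2]
    nlinarith [mul_nonneg (mul_nonneg (sq_nonneg x) (sub_pos.2 huv).le) (by linarith : (0:ℝ) ≤ u+v), mul_pos (mul_pos hu hv) (sub_pos.2 huv)]
  exact lt_of_pow_lt_pow_left₀ 2 (by positivity) hsq

lemma integral_pos_of_interval (F : ℝ → ℝ) (hint : IntegrableOn F (Ioi 0))
    (hnn : ∀ u ∈ Ioi (0:ℝ), 0 ≤ F u) (a b : ℝ) (h0 : 0 ≤ a) (hab : a < b)
    (hpos : ∀ u ∈ Ioo a b, 0 < F u) : 0 < ∫ u in Ioi (0:ℝ), F u := by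
  rw [setIntegral_pos_iff_support_of_nonneg_ae
    ((ae_restrict_iff' measurableSet_Ioi).2 (Filter.Eventually.of_forall hnn)) hint]
  have hsub : Ioo a b ⊆ Function.support F ∩ Ioi 0 :=
    fun u hu => ⟨(hpos u hu).ne', mem_Ioi.2 (h0.trans_lt hu.1)⟩
  refine lt_of_lt_of_le ?_ (measure_mono hsub)
  rw [Real.volume_Ioo]
  exact ENNReal.ofReal_pos.2 (by linarith)

end Aux
section Main
open Set Real

lemma Vm_lower (m : ℕ) (x : ℝ)
    (hI : IntegrableOn (fun u : ℝ => u ^ m * Real.exp (-u) / Real.sqrt (x ^ 2 + u)) (Ioi 0)) :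
    1 / Real.sqrt (x ^ 2 + m + 1) < Vm m x := by
  have hM : (0:ℝ) < m.factorial := by exact_mod_cast m.factorial_pos
  set t := Real.sqrt (x ^ 2 + (m:ℝ) + 1) with htdef
  have htp : 0 < t := Real.sqrt_pos.2 (by positivity)
  have ht2 : t ^ 2 = x ^ 2 + (m:ℝ) + 1 := Real.sq_sqrt (by positivity)
  have ht2' : t ^ 2 = x ^ 2 + ((m:ℝ) + 1) := by rw [ht2]; ring
  set W := ∫ u in Ioi (0:ℝ), u ^ m * Real.exp (-u) / Real.sqrt (x ^ 2 + u) with hWdef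
  set c1 : ℝ := 1/t + ((m:ℝ)+1)/(2*t^3) with hc1
  set c2 : ℝ := 1/(2*t^3) with hc2
  set D : ℝ → ℝ := fun u => u ^ m * Real.exp (-u) / Real.sqrt (x ^ 2 + u)
      - c1 * (u ^ m * Real.exp (-u)) + c2 * (u ^ (m+1) * Real.exp (-u)) with hD
  have hfact : ∀ u : ℝ, 0 < u → D u = (u ^ m * Real.exp (-u)) *
      (1/Real.sqrt (x^2+u) - 1/t + (u - ((m:ℝ)+1))/(2*t^3)) := by
    intro u hu
    simp only [hD, hc1, hc2]
    ring
  have hDnn : ∀ u ∈ Ioi (0:ℝ), 0 ≤ D u := by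
    intro u hu
    have hu' : (0:ℝ) < u := hu
    have hs : 0 < Real.sqrt (x^2+u) := Real.sqrt_pos.2 (by positivity)
    have hs2 : Real.sqrt (x^2+u)^2 = x^2+u := Real.sq_sqrt (by positivity)
    rw [hfact u hu']
    exact mul_nonneg (by positivity)
      (tangent_nonneg _ t x u ((m:ℝ)+1) hs htp hs2 ht2')
  have hDint : IntegrableOn D (Ioi 0) :=
    (hI.sub ((intOn_pow_exp m).const_mul c1)).add ((intOn_pow_exp (m+1)).const_mul c2)
  have hDpos : 0 < ∫ u in Ioi (0:ℝ), D u := by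
    apply integral_pos_of_interval D hDint hDnn 0 1 le_rfl one_pos
    intro u hu
    have hu' : (0:ℝ) < u := hu.1
    have hs : 0 < Real.sqrt (x^2+u) := Real.sqrt_pos.2 (by positivity)
    have hs2 : Real.sqrt (x^2+u)^2 = x^2+u := Real.sq_sqrt (by positivity)
    have hst : Real.sqrt (x^2+u) ≠ t := by
      intro h
      have : Real.sqrt (x^2+u)^2 = t^2 := by rw [h]
      rw [hs2, ht2'] at this
      have hm0 : (0:ℝ) ≤ (m:ℝ) := Nat.cast_nonneg m
      have := hu.2
      linarith
    rw [hfact u hu']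
    exact mul_pos (by positivity)
      (tangent_pos _ t x u ((m:ℝ)+1) hs htp hst hs2 ht2')
  have hDval : (∫ u in Ioi (0:ℝ), D u) = W - c1 * m.factorial + c2 * (m+1).factorial := by
    have h1 : IntegrableOn (fun u : ℝ => u ^ m * Real.exp (-u) / Real.sqrt (x ^ 2 + u)
        - c1 * (u ^ m * Real.exp (-u))) (Ioi 0) := hI.sub ((intOn_pow_exp m).const_mul c1)
    have h2 : IntegrableOn (fun u : ℝ => c2 * (u ^ (m+1) * Real.exp (-u))) (Ioi 0) :=
      (intOn_pow_exp (m+1)).const_mul c2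
    have h3 : IntegrableOn (fun u : ℝ => c1 * (u ^ m * Real.exp (-u))) (Ioi 0) :=
      (intOn_pow_exp m).const_mul c1
    simp only [hD]
    rw [integral_add h1 h2, integral_sub hI h3,
      integral_const_mul, integral_const_mul, int_pow_exp, int_pow_exp, ← hWdef]
  have hfac1 : ((m+1).factorial : ℝ) = ((m:ℝ)+1) * (m.factorial : ℝ) := by
    push_cast [Nat.factorial_succ]; ring
  have hWgt : (m.factorial : ℝ)/t < W := by
    have hkey : c1 * m.factorial - c2 * (m+1).factorial = (m.factorial : ℝ)/t := by
      rw [hc1, hc2, hfac1]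
      field_simp
      ring
    rw [hDval] at hDpos
    clear_value D c2 c1 W t
    linarith [hDpos, hkey]
  show 1/t < Vm m x
  unfold Vm
  rw [← hWdef]
  calc 1/t = (1/(m.factorial:ℝ)) * ((m.factorial:ℝ)/t) := by field_simp
    _ < (1/(m.factorial:ℝ)) * W := by
        apply mul_lt_mul_of_pos_left hWgt
        positivity

end Main

section Main2
open Set Real

lemma Vm_zero_upper (x : ℝ) (hx : x ≠ 0) : Vm 0 x < 1 / |x| := by
  have hax : 0 < |x| := abs_pos.2 hx
  have hI : IntegrableOn (fun u : ℝ => u ^ 0 * Real.exp (-u) / Real.sqrt (x ^ 2 + u)) (Ioi 0) :=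
    intOn_div_sqrt' 0 x hx
  set W := ∫ u in Ioi (0:ℝ), u ^ 0 * Real.exp (-u) / Real.sqrt (x ^ 2 + u) with hWdef
  set D : ℝ → ℝ := fun u => (1/|x|) * (u ^ 0 * Real.exp (-u))
      - u ^ 0 * Real.exp (-u) / Real.sqrt (x ^ 2 + u) with hD
  have hDpos' : ∀ u ∈ Ioi (0:ℝ), 0 < D u := by
    intro u hu
    have hu' : (0:ℝ) < u := hu
    have hlt : |x| < Real.sqrt (x ^ 2 + u) := by
      rw [← Real.sqrt_sq_eq_abs]
      exact Real.sqrt_lt_sqrt (sq_nonneg x) (by linarith)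
    have hE : 0 < u ^ 0 * Real.exp (-u) := by positivity
    have h1 : u ^ 0 * Real.exp (-u) / Real.sqrt (x ^ 2 + u) < u ^ 0 * Real.exp (-u) / |x| :=
      div_lt_div_of_pos_left hE hax hlt
    have h2 : (1/|x|) * (u ^ 0 * Real.exp (-u)) = u ^ 0 * Real.exp (-u) / |x| := by ring
    simp only [hD]
    linarith [h1, h2]
  have hDint : IntegrableOn D (Ioi 0) := ((intOn_pow_exp 0).const_mul (1/|x|)).sub hI
  have hDpos : 0 < ∫ u in Ioi (0:ℝ), D u := by
    apply integral_pos_of_interval D hDint (fun u hu => (hDpos' u hu).le) 0 1 le_rfl one_pos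
    intro u hu
    exact hDpos' u (mem_Ioi.2 hu.1)
  have hDval : (∫ u in Ioi (0:ℝ), D u) = (1/|x|) * (Nat.factorial 0 : ℝ) - W := by
    have h3 : IntegrableOn (fun u : ℝ => (1/|x|) * (u ^ 0 * Real.exp (-u))) (Ioi 0) :=
      (intOn_pow_exp 0).const_mul (1/|x|)
    simp only [hD]
    rw [integral_sub h3 hI, integral_const_mul, int_pow_exp, ← hWdef]
  have : W < 1/|x| := by
    rw [hDval] at hDpos
    clear_value D W
    simp only [Nat.factorial_zero, Nat.cast_one, mul_one] at hDpos
    linarith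
  unfold Vm
  rw [← hWdef]
  simpa using this

end Main2

section Main3
open Set Real

set_option maxHeartbeats 1000000 in
lemma Vm_upper (k : ℕ) (x : ℝ) : Vm (k+1) x < 1 / Real.sqrt (x ^ 2 + (k:ℝ) + 1) := by
  have hK : (0:ℝ) < (k.factorial : ℝ) := by exact_mod_cast k.factorial_pos
  have hM : (0:ℝ) < ((k+1).factorial : ℝ) := by exact_mod_cast (k+1).factorial_pos
  have hMK : ((k+1).factorial : ℝ) = ((k:ℝ)+1) * (k.factorial : ℝ) := by
    push_cast [Nat.factorial_succ]; ring
  set s' := Real.sqrt (x ^ 2 + (k:ℝ) + 1) with hs'def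
  have hs' : 0 < s' := Real.sqrt_pos.2 (by positivity)
  have hs'2 : s' ^ 2 = x ^ 2 + (k:ℝ) + 1 := Real.sq_sqrt (by positivity)
  set W := ∫ u in Ioi (0:ℝ), u ^ (k+1) * Real.exp (-u) / Real.sqrt (x ^ 2 + u) with hWdef
  set U := ∫ u in Ioi (0:ℝ), u ^ (k+1) * Real.exp (-u) / (x ^ 2 + u) with hUdef
  have hIf := intOn_div_sqrt k x
  have hIg := intOn_div_sq k x
  have hIp := intOn_pow_exp k
  have hIp1 := intOn_pow_exp (k+1)
  have hW0 : 0 ≤ W := setIntegral_nonneg measurableSet_Ioi (fun u hu => by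
    have hu' : (0:ℝ) < u := hu
    positivity)
  have hU0 : 0 ≤ U := setIntegral_nonneg measurableSet_Ioi (fun u hu => by
    have hu' : (0:ℝ) < u := hu
    positivity)
  -- Cauchy-Schwarz (B): W^2 ≤ M * U
  have hB : W ^ 2 ≤ ((k+1).factorial : ℝ) * U := by
    set ν : ℝ := W / ((k+1).factorial : ℝ) with hν
    have hnn : 0 ≤ ∫ u in Ioi (0:ℝ),
        (u ^ (k+1) * Real.exp (-u) / (x ^ 2 + u)
          - 2*ν*(u ^ (k+1) * Real.exp (-u) / Real.sqrt (x ^ 2 + u))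
          + ν^2*(u ^ (k+1) * Real.exp (-u))) := by
      apply setIntegral_nonneg measurableSet_Ioi
      intro u hu
      have hu' : (0:ℝ) < u := hu
      have hs : 0 < Real.sqrt (x ^ 2 + u) := Real.sqrt_pos.2 (by positivity)
      have hs2 : Real.sqrt (x ^ 2 + u) ^ 2 = x ^ 2 + u := Real.sq_sqrt (by positivity)
      rw [identB k (Real.exp (-u)) (Real.sqrt (x ^ 2 + u)) u x ν hs.ne' hs2]
      positivity
    have h1 : IntegrableOn (fun u : ℝ => u ^ (k+1) * Real.exp (-u) / (x ^ 2 + u)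
        - 2*ν*(u ^ (k+1) * Real.exp (-u) / Real.sqrt (x ^ 2 + u))) (Ioi 0) :=
      hIg.sub (hIf.const_mul (2*ν))
    have h2 : IntegrableOn (fun u : ℝ => ν^2*(u ^ (k+1) * Real.exp (-u))) (Ioi 0) :=
      hIp1.const_mul (ν^2)
    have h3 : IntegrableOn (fun u : ℝ =>
        2*ν*(u ^ (k+1) * Real.exp (-u) / Real.sqrt (x ^ 2 + u))) (Ioi 0) :=
      hIf.const_mul (2*ν)
    rw [integral_add h1 h2, integral_sub hIg h3, integral_const_mul, integral_const_mul,
      int_pow_exp, ← hUdef, ← hWdef] at hnn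
    have e1 : U - 2*ν*W + ν^2*((k+1).factorial : ℝ) = U - W^2/((k+1).factorial : ℝ) := by
      rw [hν]; field_simp; ring
    rw [e1] at hnn
    have h4 : W^2/((k+1).factorial : ℝ) ≤ U := by linarith
    have h5 := (div_le_iff₀ hM).1 h4
    rw [mul_comm]
    exact h5
  -- strict Cauchy-Schwarz (A): W^2 < K * (M - x^2 * U)
  set l : ℝ := W / (k.factorial : ℝ) with hl
  set F : ℝ → ℝ := fun u => u ^ (k+1) * Real.exp (-u)
      - x^2*(u ^ (k+1) * Real.exp (-u) / (x ^ 2 + u))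
      - 2*l*(u ^ (k+1) * Real.exp (-u) / Real.sqrt (x ^ 2 + u))
      + l^2*(u ^ k * Real.exp (-u)) with hF
  have hIF : IntegrableOn F (Ioi 0) :=
    ((hIp1.sub (hIg.const_mul (x^2))).sub (hIf.const_mul (2*l))).add (hIp.const_mul (l^2))
  have hFsq : ∀ u : ℝ, 0 < u → F u
      = u ^ k * Real.exp (-u) * (u / Real.sqrt (x ^ 2 + u) - l)^2 := by
    intro u hu'
    have hs : 0 < Real.sqrt (x ^ 2 + u) := Real.sqrt_pos.2 (by positivity)
    have hs2 : Real.sqrt (x ^ 2 + u) ^ 2 = x ^ 2 + u := Real.sq_sqrt (by positivity)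
    simp only [hF]
    exact identA k (Real.exp (-u)) (Real.sqrt (x ^ 2 + u)) u x l hs.ne' hs2
  have hFnn : ∀ u ∈ Ioi (0:ℝ), 0 ≤ F u := by
    intro u hu
    have hu' : (0:ℝ) < u := hu
    rw [hFsq u hu']
    positivity
  have hFpos : 0 < ∫ u in Ioi (0:ℝ), F u := by
    have hone : (0:ℝ) < 1 := one_pos
    rcases le_or_gt ((1:ℝ)/Real.sqrt (x^2+1)) l with hcase | hcase
    · apply integral_pos_of_interval F hIF hFnn (1/2) 1 (by norm_num) (by norm_num)
      intro u hu
      have hu' : (0:ℝ) < u := by linarith [hu.1]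
      have hlt : u / Real.sqrt (x^2+u) < 1 / Real.sqrt (x^2+1) := c_mono x u 1 hu' hu.2
      have hne : u / Real.sqrt (x ^ 2 + u) - l ≠ 0 := by
        intro h
        have := sub_eq_zero.1 h
        rw [this] at hlt
        linarith
      rw [hFsq u hu']
      have hsq : 0 < (u / Real.sqrt (x ^ 2 + u) - l)^2 :=
        lt_of_le_of_ne (sq_nonneg _) (Ne.symm (pow_ne_zero 2 hne))
      have hP : 0 < u ^ k * Real.exp (-u) := by positivity
      exact mul_pos hP hsq
    · apply integral_pos_of_interval F hIF hFnn 1 2 (by norm_num) (by norm_num)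
      intro u hu
      have hu' : (0:ℝ) < u := by linarith [hu.1]
      have hlt : 1 / Real.sqrt (x^2+1) < u / Real.sqrt (x^2+u) := c_mono x 1 u one_pos hu.1
      have hne : u / Real.sqrt (x ^ 2 + u) - l ≠ 0 := by
        intro h
        have := sub_eq_zero.1 h
        rw [this] at hlt
        linarith
      rw [hFsq u hu']
      have hsq : 0 < (u / Real.sqrt (x ^ 2 + u) - l)^2 :=
        lt_of_le_of_ne (sq_nonneg _) (Ne.symm (pow_ne_zero 2 hne))
      have hP : 0 < u ^ k * Real.exp (-u) := by positivity
      exact mul_pos hP hsq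
  have hFval : (∫ u in Ioi (0:ℝ), F u)
      = ((k+1).factorial : ℝ) - x^2*U - 2*l*W + l^2*(k.factorial : ℝ) := by
    have h1 : IntegrableOn (fun u : ℝ => u ^ (k+1) * Real.exp (-u)
        - x^2*(u ^ (k+1) * Real.exp (-u) / (x ^ 2 + u))
        - 2*l*(u ^ (k+1) * Real.exp (-u) / Real.sqrt (x ^ 2 + u))) (Ioi 0) :=
      (hIp1.sub (hIg.const_mul (x^2))).sub (hIf.const_mul (2*l))
    have h2 : IntegrableOn (fun u : ℝ => l^2*(u ^ k * Real.exp (-u))) (Ioi 0) :=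
      hIp.const_mul (l^2)
    have h3 : IntegrableOn (fun u : ℝ => u ^ (k+1) * Real.exp (-u)
        - x^2*(u ^ (k+1) * Real.exp (-u) / (x ^ 2 + u))) (Ioi 0) :=
      hIp1.sub (hIg.const_mul (x^2))
    have h4 : IntegrableOn (fun u : ℝ =>
        2*l*(u ^ (k+1) * Real.exp (-u) / Real.sqrt (x ^ 2 + u))) (Ioi 0) :=
      hIf.const_mul (2*l)
    have h5 : IntegrableOn (fun u : ℝ =>
        x^2*(u ^ (k+1) * Real.exp (-u) / (x ^ 2 + u))) (Ioi 0) :=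
      hIg.const_mul (x^2)
    simp only [hF]
    rw [integral_add h1 h2, integral_sub h3 h4, integral_sub hIp1 h5,
      integral_const_mul, integral_const_mul, integral_const_mul,
      int_pow_exp, int_pow_exp, ← hUdef, ← hWdef]
  have hA : W ^ 2 < (k.factorial : ℝ) * (((k+1).factorial : ℝ) - x^2*U) := by
    rw [hFval] at hFpos
    have e : ((k+1).factorial : ℝ) - x^2*U - 2*l*W + l^2*(k.factorial : ℝ)
        = ((k+1).factorial : ℝ) - x^2*U - W^2/(k.factorial : ℝ) := by
      rw [hl]; field_simp; ring
    rw [e] at hFpos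
    have h6 : W^2/(k.factorial : ℝ) < ((k+1).factorial : ℝ) - x^2*U := by linarith
    have h7 := (div_lt_iff₀ hK).1 h6
    rw [mul_comm]
    exact h7
  -- combine
  have hWs : W * s' < ((k+1).factorial : ℝ) := by
    have hU' : W^2/((k+1).factorial : ℝ) ≤ U :=
      (div_le_iff₀ hM).2 (hB.trans_eq (mul_comm _ _))
    have step : W ^ 2 < (k.factorial : ℝ)
        * (((k+1).factorial : ℝ) - x^2*(W^2/((k+1).factorial : ℝ))) := by
      refine lt_of_lt_of_le hA ?_
      have h8 : x^2*(W^2/((k+1).factorial : ℝ)) ≤ x^2*U :=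
        mul_le_mul_of_nonneg_left hU' (sq_nonneg x)
      exact mul_le_mul_of_nonneg_left (by linarith [h8]) hK.le
    have e2 : (k.factorial : ℝ)
        * (((k+1).factorial : ℝ) - x^2*(W^2/((k+1).factorial : ℝ)))
        * ((k+1).factorial : ℝ)
        = (k.factorial : ℝ) * ((k+1).factorial : ℝ)^2
          - (k.factorial : ℝ) * x^2 * W^2 * 1 := by
      field_simp
    have h3 : W^2 * ((k+1).factorial : ℝ)
        < (k.factorial : ℝ) * ((k+1).factorial : ℝ)^2 - (k.factorial : ℝ) * x^2 * W^2 := by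
      have := mul_lt_mul_of_pos_right step hM
      rw [e2] at this
      linarith
    have h5 : W^2*(x^2+(k:ℝ)+1)*(k.factorial : ℝ)
        < ((k+1).factorial : ℝ)^2*(k.factorial : ℝ) := by
      clear_value W U s'
      calc W^2*(x^2+(k:ℝ)+1)*(k.factorial : ℝ)
          = W^2*((k+1).factorial : ℝ) + (k.factorial : ℝ)*x^2*W^2 := by rw [hMK]; ring
        _ < (k.factorial : ℝ)*((k+1).factorial : ℝ)^2 - (k.factorial : ℝ)*x^2*W^2
            + (k.factorial : ℝ)*x^2*W^2 := by linarith [h3]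
        _ = ((k+1).factorial : ℝ)^2*(k.factorial : ℝ) := by ring
    have h6 : W^2*(x^2+(k:ℝ)+1) < ((k+1).factorial : ℝ)^2 :=
      lt_of_mul_lt_mul_right (by linarith [h5]) hK.le
    have hsq : (W * s') ^ 2 < ((k+1).factorial : ℝ) ^ 2 := by
      rw [mul_pow, hs'2]
      linarith [h6]
    exact lt_of_pow_lt_pow_left₀ 2 hM.le hsq
  unfold Vm
  rw [← hWdef]
  have e3 : (1:ℝ) / ((k+1).factorial : ℝ) * W = W / ((k+1).factorial : ℝ) := by ring
  rw [e3, div_lt_div_iff₀ hM hs']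
  linarith [hWs]

end Main3

/-- For `m ≥ 1` and every `x`:
`(x² + m)^{−1/2} > V_m(x) > (x² + m + 1)^{−1/2}`; and for `m = 0` and `x ≠ 0`:
`1/|x| > V_0(x) > (x² + 1)^{−1/2}`. -/
theorem Vm_sqrt_bounds (m : ℕ) :
    (1 ≤ m → ∀ x : ℝ,
      Vm m x < 1 / Real.sqrt (x ^ 2 + m) ∧ 1 / Real.sqrt (x ^ 2 + m + 1) < Vm m x) ∧
    (∀ x : ℝ, x ≠ 0 →
      Vm 0 x < 1 / |x| ∧ 1 / Real.sqrt (x ^ 2 + 1) < Vm 0 x) := by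
  constructor
  · intro hm x
    obtain ⟨k, rfl⟩ : ∃ k, m = k + 1 := ⟨m - 1, (Nat.succ_pred_eq_of_pos hm).symm⟩
    constructor
    · have h := Vm_upper k x
      have e : x ^ 2 + ((k:ℝ) + 1) = x ^ 2 + (k:ℝ) + 1 := by ring
      push_cast
      rw [e]
      exact h
    · exact Vm_lower (k+1) x (intOn_div_sqrt k x)
  · intro x hx
    refine ⟨Vm_zero_upper x hx, ?_⟩
    have h := Vm_lower 0 x (intOn_div_sqrt' 0 x hx)
    simpa using h
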